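/- arXiv:2007.09705 — 2 statements merged into one kernel-verified Lean document; each statement's English description precedes it below -/
import Mathlib

section
/- Suffix Property: if two grid entries G(i,j) and G(i',j') have the same main suffix, then i = i'; that is, two strings with the same main suffix belong to the same row of the grid. -/
abbrev Digit := Fin 3

/-- Helper for `addTwo`, acting on the reversed (least significant digit first) string:
replace each digit `d` by `d - 1 (mod 3)` up to and including the first digit 0;
if no digit 0 occurs, a digit 0 is first prepended at the most significant end
(and then becomes 2). -/
def addTwoAux : List Digit → List Digit
  | [] => [2]
  | d :: rest => if d = 0 then (d + 2) :: rest else (d + 2) :: addTwoAux rest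

/-- Adding two in base 3/2: all digits at or to the right of the rightmost 0
(including that 0) are decreased by 1 modulo 3; if there is no 0, a 0 is first
prepended. -/
def addTwo (w : List Digit) : List Digit := (addTwoAux w.reverse).reverse

/-- Binary representation of `j` (digits 0 and 1, most significant first, no leading
zeros), with `binRep 0 = [0]`. -/
def binRep (j : ℕ) : List Digit :=
  if j = 0 then [0] else (Nat.digits 2 j).reverse.map (fun d => (Fin.ofNat 3 d : Digit))

/-- The grid: row 0 consists of the binary representations in increasing order, and
each subsequent row is obtained entrywise by adding two in base 3/2. -/
def G : ℕ → ℕ → List Digit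
  | 0, j => binRep j
  | i + 1, j => addTwo (G i j)

/-- The main suffix of a digit string: the suffix obtained by removing the maximal
initial segment consisting only of digits 0 and 1. -/
def mainSuffix (w : List Digit) : List Digit := w.dropWhile (fun d => d != 2)

/-- Row invariant: fold left with `a ↦ ⌊(3a+d)/2⌋`. -/
def phi (w : List Digit) : ℕ := w.foldl (fun a d => (3 * a + d.val) / 2) 0

/-- The same invariant computed on the reversed string. -/
def psi (l : List Digit) : ℕ := l.foldr (fun d a => (3 * a + d.val) / 2) 0

lemma phi_eq_psi_reverse (w : List Digit) : phi w = psi w.reverse := by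
  unfold phi psi
  rw [List.foldr_reverse]

lemma psi_addTwoAux (l : List Digit) : psi (addTwoAux l) = psi l + 1 := by
  induction l with
  | nil => decide
  | cons d rest ih =>
    by_cases hd : d = 0
    · subst hd
      simp only [addTwoAux, if_pos rfl, psi, List.foldr_cons]
      show (3 * (List.foldr _ 0 rest) + (2 : Fin 3).val) / 2
        = (3 * (List.foldr _ 0 rest) + (0 : Fin 3).val) / 2 + 1
      omega
    · simp only [addTwoAux, if_neg hd, psi, List.foldr_cons]
      show (3 * psi (addTwoAux rest) + (d + 2).val) / 2
        = (3 * psi rest + d.val) / 2 + 1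
      rw [ih]
      fin_cases d
      · exact absurd rfl hd
      · show (3 * (psi rest + 1) + 0) / 2 = (3 * psi rest + 1) / 2 + 1
        omega
      · show (3 * (psi rest + 1) + 1) / 2 = (3 * psi rest + 2) / 2 + 1
        omega

lemma phi_addTwo (w : List Digit) : phi (addTwo w) = phi w + 1 := by
  unfold addTwo
  rw [phi_eq_psi_reverse, List.reverse_reverse, psi_addTwoAux,
    ← phi_eq_psi_reverse]

lemma foldl_zero_of_ne_two (l : List Digit) (hl : ∀ d ∈ l, d ≠ 2) :
    l.foldl (fun a d => (3 * a + d.val) / 2) 0 = 0 := by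
  induction l with
  | nil => rfl
  | cons d rest ih =>
    have hd : d ≠ 2 := hl d (by simp)
    have hdv : d.val < 2 := by
      fin_cases d
      · norm_num
      · norm_num
      · exact absurd rfl hd
    simp only [List.foldl_cons]
    have : (3 * 0 + d.val) / 2 = 0 := by omega
    rw [this]
    exact ih fun x hx => hl x (List.mem_cons_of_mem _ hx)

lemma phi_binRep (j : ℕ) : phi (binRep j) = 0 := by
  unfold binRep
  split
  · decide
  · apply foldl_zero_of_ne_two
    intro d hd
    obtain ⟨x, hx, rfl⟩ : ∃ x ∈ Nat.digits 2 j, (Fin.ofNat 3 x : Digit) = d := by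
      obtain ⟨x, hx, e⟩ := List.mem_map.mp hd
      exact ⟨x, List.mem_reverse.mp hx, e⟩
    have : x < 2 := Nat.digits_lt_base (by norm_num) hx
    interval_cases x <;> decide

lemma phi_mainSuffix (w : List Digit) : phi (mainSuffix w) = phi w := by
  conv_rhs => rw [← List.takeWhile_append_dropWhile (p := fun d => d != 2) (l := w)]
  unfold phi mainSuffix
  rw [List.foldl_append]
  congr 1
  symm
  apply foldl_zero_of_ne_two
  intro d hd
  have := List.mem_takeWhile_imp hd
  simpa using this

lemma phi_G (i j : ℕ) : phi (G i j) = i := by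
  induction i with
  | zero => exact phi_binRep j
  | succ i ih => rw [G, phi_addTwo, ih]

/-- Suffix property: two grid entries with the same main suffix belong to the same
row of the grid. -/
theorem suffix_property (i j i' j' : ℕ)
    (h : mainSuffix (G i j) = mainSuffix (G i' j')) : i = i' := by
  have := congrArg phi h
  rwa [phi_mainSuffix, phi_mainSuffix, phi_G, phi_G] at this
end

section
/- HalfZ structure: for all natural numbers a and b there exists a digit string w (possibly empty) such that G(3a,2b) = w followed by the digit 0, G(3a,2b+1) = w followed by the digit 1, and G(3a+1,2b) = w followed by the digit 2; and there exists a digit string w' such that G(3a+1,2b+1) = w' followed by the digit 0, G(3a+2,2b) = w' followed by the digit 1, and G(3a+2,2b+1) = w' followed by the digit 2. In particular, every grid entry belongs to exactly one such triple (halfZ). -/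
lemma addTwo_app0 (w : List Digit) : addTwo (w ++ [0]) = w ++ [2] := by
  simp [addTwo, addTwoAux]

lemma addTwo_app1 (w : List Digit) : addTwo (w ++ [1]) = addTwo w ++ [0] := by
  simp [addTwo, addTwoAux]

lemma addTwo_app2 (w : List Digit) : addTwo (w ++ [2]) = addTwo w ++ [1] := by
  simp [addTwo, addTwoAux]

lemma G_eq_iter (i j : ℕ) : G i j = addTwo^[i] (binRep j) := by
  induction i with
  | zero => rfl
  | succ i ih => rw [Function.iterate_succ_apply', ← ih]; rfl

lemma iter_key (a : ℕ) (u : List Digit) :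
    addTwo^[3*a] (u ++ [0]) = addTwo^[2*a] u ++ [0] ∧
    addTwo^[3*a] (u ++ [1]) = addTwo^[2*a] u ++ [1] := by
  induction a with
  | zero => simp
  | succ a ih =>
    have h3 : 3 * (a+1) = 3 + 3 * a := by ring
    have h2 : 2 * (a+1) = 2 + 2 * a := by ring
    rw [h3, h2]
    rw [Function.iterate_add_apply, Function.iterate_add_apply,
      Function.iterate_add_apply addTwo 3 (3*a), ih.1, ih.2]
    constructor <;>
      simp [show (3:ℕ) = 1+1+1 from rfl, show (2:ℕ) = 1+1 from rfl,
        Function.iterate_add_apply, addTwo_app0, addTwo_app1, addTwo_app2]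

/-- HalfZ structure: the triples `G(3a,2b), G(3a,2b+1), G(3a+1,2b)` and
`G(3a+1,2b+1), G(3a+2,2b), G(3a+2,2b+1)` each consist of a common string followed by
the digits 0, 1, 2 respectively. -/
theorem halfZ_structure (a b : ℕ) :
    (∃ w : List Digit,
      G (3 * a) (2 * b) = w ++ [0] ∧
      G (3 * a) (2 * b + 1) = w ++ [1] ∧
      G (3 * a + 1) (2 * b) = w ++ [2]) ∧
    (∃ w' : List Digit,
      G (3 * a + 1) (2 * b + 1) = w' ++ [0] ∧
      G (3 * a + 2) (2 * b) = w' ++ [1] ∧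
      G (3 * a + 2) (2 * b + 1) = w' ++ [2]) := by
  -- binary representation facts
  obtain ⟨u, hu0, hu1⟩ : ∃ u : List Digit,
      binRep (2*b) = u ++ [0] ∧ binRep (2*b+1) = u ++ [1] := by
    rcases Nat.eq_zero_or_pos b with rfl | hb
    · exact ⟨[], by simp [binRep], by norm_num [binRep, Nat.digits_def']; rfl⟩
    · refine ⟨(Nat.digits 2 b).reverse.map (fun d => (Fin.ofNat 3 d : Digit)), ?_, ?_⟩
      · have h0 : Nat.digits 2 (2*b) = 0 :: Nat.digits 2 b := by
          rw [Nat.digits_def' (by norm_num) (by omega)]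
          simp [Nat.mul_div_cancel_left _ (by norm_num : 0 < 2), Nat.mul_mod_right]
        simp only [binRep, if_neg (show 2*b ≠ 0 by omega), h0, List.reverse_cons,
          List.map_append, List.map_cons, List.map_nil]
        norm_num
      · have h1 : Nat.digits 2 (2*b+1) = 1 :: Nat.digits 2 b := by
          rw [Nat.digits_def' (by norm_num) (by omega)]
          congr 1
          · omega
          · congr 1; omega
        simp only [binRep, if_neg (show 2*b+1 ≠ 0 by omega), h1, List.reverse_cons,
          List.map_append, List.map_cons, List.map_nil]
        norm_num
        rfl
  have key := iter_key a u
  have e0 : G (3*a) (2*b) = addTwo^[2*a] u ++ [0] := by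
    rw [G_eq_iter, hu0, key.1]
  have e1 : G (3*a) (2*b+1) = addTwo^[2*a] u ++ [1] := by
    rw [G_eq_iter, hu1, key.2]
  have e2 : G (3*a+1) (2*b) = addTwo^[2*a] u ++ [2] := by
    rw [show 3*a+1 = 1 + 3*a from by ring, G_eq_iter, hu0,
      Function.iterate_add_apply, key.1]
    simp [addTwo_app0]
  have e3 : G (3*a+1) (2*b+1) = addTwo (addTwo^[2*a] u) ++ [0] := by
    rw [show 3*a+1 = 1 + 3*a from by ring, G_eq_iter, hu1,
      Function.iterate_add_apply, key.2]
    simp [addTwo_app1]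
  have e4 : G (3*a+2) (2*b) = addTwo (addTwo^[2*a] u) ++ [1] := by
    rw [show 3*a+2 = 2 + 3*a from by ring, G_eq_iter, hu0,
      Function.iterate_add_apply, key.1]
    simp [show (2:ℕ) = 1+1 from rfl, Function.iterate_add_apply,
      addTwo_app0, addTwo_app2]
  have e5 : G (3*a+2) (2*b+1) = addTwo (addTwo^[2*a] u) ++ [2] := by
    rw [show 3*a+2 = 2 + 3*a from by ring, G_eq_iter, hu1,
      Function.iterate_add_apply, key.2]
    simp [show (2:ℕ) = 1+1 from rfl, Function.iterate_add_apply,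
      addTwo_app1, addTwo_app0]
  exact ⟨⟨_, e0, e1, e2⟩, ⟨_, e3, e4, e5⟩⟩
end
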